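/- For any n, m ∈ ℕ and any k, l ∈ {1, ..., min(n,m)}, there exists a unitary U ∈ U(ℂ^n ⊗ ℂ^m) with operator Schmidt rank Ω(U) = kl. -/

import Mathlib

open Matrix Kronecker

/-- The realignment (reshuffling) of a bipartite operator. -/
def realign {n m : ℕ} (X : Matrix (Fin n × Fin m) (Fin n × Fin m) ℂ) :
    Matrix (Fin n × Fin n) (Fin m × Fin m) ℂ :=
  Matrix.of fun p q => X (p.1, q.1) (p.2, q.2)

/-- The operator Schmidt rank of a bipartite operator, i.e. the rank
of its realignment. -/
noncomputable def osr {n m : ℕ} (X : Matrix (Fin n × Fin m) (Fin n × Fin m) ℂ) : ℕ :=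
  (realign X).rank

namespace Stmt12Aux

def sf (n k : ℕ) [NeZero n] (a : ℕ) : Fin n :=
  ⟨min a (k - 1) % n, Nat.mod_lt _ (Nat.pos_of_ne_zero (NeZero.ne n))⟩

lemma sf_val {n k : ℕ} [NeZero n] (hk : 1 ≤ k) (hkn : k ≤ n) (a : ℕ) :
    (sf n k a).val = min a (k - 1) := Nat.mod_eq_of_lt (by omega)

def shear1 (n m : ℕ) [NeZero n] [NeZero m] (f : Fin m → Fin n) :
    Equiv.Perm (Fin n × Fin m) where
  toFun x := (x.1 + f x.2, x.2)
  invFun x := (x.1 - f x.2, x.2)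
  left_inv x := by simp
  right_inv x := by simp

def shear2 (n m : ℕ) [NeZero n] [NeZero m] (g : Fin n → Fin m) :
    Equiv.Perm (Fin n × Fin m) where
  toFun x := (x.1, x.2 + g x.1)
  invFun x := (x.1, x.2 - g x.1)
  left_inv x := by simp
  right_inv x := by simp

lemma perm_mem_unitary {ι : Type*} [Fintype ι] [DecidableEq ι] (π : Equiv.Perm ι) :
    (Matrix.of fun x y => if x = π y then (1 : ℂ) else 0) ∈ Matrix.unitaryGroup ι ℂ := by
  rw [Matrix.mem_unitaryGroup_iff]
  ext x y
  simp only [Matrix.mul_apply, Matrix.star_apply, Matrix.of_apply, Matrix.one_apply]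
  have h : ∀ z, (if x = π z then (1 : ℂ) else 0) * star (if y = π z then (1 : ℂ) else 0)
      = if z = π.symm x then (if y = π z then (1 : ℂ) else 0) else 0 := by
    intro z
    by_cases hz : z = π.symm x
    · subst hz; simp
    · rw [if_neg hz, if_neg, zero_mul]
      rw [Equiv.eq_symm_apply] at hz
      exact fun hx => hz (hx ▸ rfl)
  rw [Finset.sum_congr rfl fun z _ => h z, Finset.sum_ite_eq' _ _ _]
  simp only [Finset.mem_univ, if_true, Equiv.apply_symm_apply]
  by_cases hxy : x = y
  · subst hxy; simp
  · rw [if_neg (fun hc : y = x => hxy hc.symm), if_neg hxy]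

def ff (n k : ℕ) [NeZero n] {m : ℕ} (j : Fin m) : Fin n := sf n k j.val

def gg (m l : ℕ) [NeZero m] {n : ℕ} (i : Fin n) : Fin m := sf m l i.val

def pe (n m k l : ℕ) [NeZero n] [NeZero m] : Equiv.Perm (Fin n × Fin m) :=
  (shear1 n m (ff n k)).trans (shear2 n m (gg m l))

def UU (n m k l : ℕ) [NeZero n] [NeZero m] : Matrix (Fin n × Fin m) (Fin n × Fin m) ℂ :=
  Matrix.of fun x y => if x = pe n m k l y then 1 else 0

def WW (n m l : ℕ) [NeZero n] [NeZero m] (φ : Fin n) (δ : Fin m) : Fin n × Fin n → ℂ :=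
  fun p => if (p.1 - p.2 = φ ∧ δ = gg m l p.1) then 1 else 0

lemma col_eq (n m k l : ℕ) [NeZero n] [NeZero m] (q : Fin m × Fin m) :
    (realign (UU n m k l))ᵀ q = WW n m l (ff n k q.2) (q.1 - q.2) := by
  funext p
  show (if (p.1, q.1) = pe n m k l (p.2, q.2) then (1:ℂ) else 0)
      = if (p.1 - p.2 = ff n k q.2 ∧ q.1 - q.2 = gg m l p.1) then 1 else 0
  refine if_congr ?_ rfl rfl
  show (p.1, q.1) = (p.2 + ff n k q.2, q.2 + gg m l (p.2 + ff n k q.2)) ↔ _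
  rw [Prod.ext_iff]
  constructor
  · rintro ⟨h1, h2⟩
    dsimp only at h1 h2
    have hp : p.1 - p.2 = ff n k q.2 := by rw [h1]; exact add_sub_cancel_left _ _
    refine ⟨hp, ?_⟩
    rw [h2, add_sub_cancel_left, ← h1]
  · rintro ⟨h1, h2⟩
    have hp : p.1 = p.2 + ff n k q.2 := sub_eq_iff_eq_add'.mp h1
    refine ⟨hp, ?_⟩
    dsimp only
    rw [← hp]
    exact sub_eq_iff_eq_add'.mp h2

def VV (n m : ℕ) [NeZero n] [NeZero m] {k l : ℕ} (hkn : k ≤ n) (hlm : l ≤ m) :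
    Fin k × Fin l → (Fin n × Fin n → ℂ) :=
  fun ab => WW n m l (Fin.castLE hkn ab.1) (Fin.castLE hlm ab.2)

lemma WW_eq_zero (n m l : ℕ) [NeZero n] [NeZero m] (hl : 1 ≤ l) (hlm : l ≤ m)
    (φ : Fin n) (δ : Fin m) (hδ : l ≤ δ.val) :
    WW n m l φ δ = 0 := by
  funext p
  refine if_neg ?_
  rintro ⟨-, h2⟩
  have h3 := sf_val (n := m) (k := l) hl hlm p.1.val
  have h4 : δ.val = min p.1.val (l - 1) := by rw [h2]; exact h3
  omega

lemma VV_mem (n m : ℕ) [NeZero n] [NeZero m] {k l : ℕ} (hk : 1 ≤ k) (hkn : k ≤ n)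
    (hkm : k ≤ m) (hlm : l ≤ m) (ab : Fin k × Fin l) :
    VV n m hkn hlm ab ∈ Set.range (realign (UU n m k l))ᵀ := by
  refine ⟨(⟨ab.1.val, lt_of_lt_of_le ab.1.isLt hkm⟩ + Fin.castLE hlm ab.2,
    ⟨ab.1.val, lt_of_lt_of_le ab.1.isLt hkm⟩), ?_⟩
  rw [col_eq]
  unfold VV
  dsimp only
  refine congrArg₂ (WW n m l) ?_ ?_
  · apply Fin.ext
    rw [show (ff n k (⟨ab.1.val, lt_of_lt_of_le ab.1.isLt hkm⟩ : Fin m)).val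
        = min ab.1.val (k-1) from sf_val hk hkn _]
    simp only [Fin.coe_castLE]
    have := ab.1.isLt
    omega
  · exact add_sub_cancel_left _ _

lemma cols_sub (n m : ℕ) [NeZero n] [NeZero m] {k l : ℕ} (hk : 1 ≤ k) (hkn : k ≤ n)
    (hl : 1 ≤ l) (hlm : l ≤ m) (q : Fin m × Fin m) :
    (realign (UU n m k l))ᵀ q ∈ Set.range (VV n m hkn hlm) ∪ {0} := by
  rw [col_eq]
  by_cases hδ : (q.1 - q.2).val < l
  · left
    have hf : (ff n k q.2).val < k := by
      rw [show (ff n k q.2).val = min q.2.val (k-1) from sf_val hk hkn _]; omega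
    refine ⟨(⟨(ff n k q.2).val, hf⟩, ⟨(q.1 - q.2).val, hδ⟩), ?_⟩
    unfold VV
    dsimp only
    exact (congrArg₂ (WW n m l) (Fin.ext (by simp)) (Fin.ext (by simp))).symm
  · right
    exact WW_eq_zero n m l hl hlm _ _ (le_of_not_gt hδ)

lemma VV_li (n m : ℕ) [NeZero n] [NeZero m] {k l : ℕ} (hk : 1 ≤ k) (hkn : k ≤ n)
    (hl : 1 ≤ l) (hln : l ≤ n) (hlm : l ≤ m) :
    LinearIndependent ℂ (VV n m hkn hlm) := by
  rw [Fintype.linearIndependent_iff]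
  intro c hc ab
  obtain ⟨a, b⟩ := ab
  set i₀ : Fin n := ⟨b.val, lt_of_lt_of_le b.isLt hln⟩ with hi₀
  set p : Fin n × Fin n := (i₀, i₀ - Fin.castLE hkn a) with hp
  have hgg : gg m l i₀ = Fin.castLE hlm b := by
    apply Fin.ext
    rw [show (gg m l i₀).val = min i₀.val (l-1) from sf_val hl hlm _]
    simp only [Fin.coe_castLE]
    have := b.isLt
    have hi : i₀.val = b.val := rfl
    omega
  have hval : ∀ a' : Fin k, ∀ b' : Fin l,
      VV n m hkn hlm (a', b') p = if (a', b') = (a, b) then 1 else 0 := by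
    intro a' b'
    show (if (p.1 - p.2 = Fin.castLE hkn a' ∧ Fin.castLE hlm b' = gg m l p.1) then (1:ℂ) else 0) = _
    have h1 : p.1 - p.2 = Fin.castLE hkn a := sub_sub_cancel _ _
    refine if_congr ?_ rfl rfl
    rw [h1]
    show Fin.castLE hkn a = Fin.castLE hkn a' ∧ Fin.castLE hlm b' = gg m l i₀ ↔ _
    rw [hgg, Prod.mk.injEq]
    rw [show (Fin.castLE hkn a = Fin.castLE hkn a') ↔ (a' = a) from
      ⟨fun h => (Fin.castLE_inj.mp h).symm, fun h => by rw [h]⟩]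
    rw [show (Fin.castLE hlm b' = Fin.castLE hlm b) ↔ (b' = b) from
      ⟨fun h => Fin.castLE_inj.mp h, fun h => by rw [h]⟩]
  have := congrFun hc p
  simp only [Finset.sum_apply, Pi.smul_apply, smul_eq_mul, Pi.zero_apply] at this
  rw [Finset.sum_congr rfl (fun x _ => by rw [show VV n m hkn hlm x p = if x = (a,b) then 1 else 0 from hval x.1 x.2, mul_ite, mul_one, mul_zero])] at this
  rw [Finset.sum_ite_eq' Finset.univ ((a : Fin k), (b : Fin l)) c] at this
  simpa using this

end Stmt12Aux

/-- For any `k, l ∈ {1, ..., min(n,m)}` there is a unitary on `ℂ^n ⊗ ℂ^m`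
with operator Schmidt rank `k·l`. -/
theorem stmt12 (n m k l : ℕ) (hk : 1 ≤ k) (hk' : k ≤ min n m)
    (hl : 1 ≤ l) (hl' : l ≤ min n m) :
    ∃ U ∈ Matrix.unitaryGroup (Fin n × Fin m) ℂ, osr U = k * l := by
  have hkn : k ≤ n := le_trans hk' (min_le_left _ _)
  have hkm : k ≤ m := le_trans hk' (min_le_right _ _)
  have hln : l ≤ n := le_trans hl' (min_le_left _ _)
  have hlm : l ≤ m := le_trans hl' (min_le_right _ _)
  haveI : NeZero n := ⟨by omega⟩
  haveI : NeZero m := ⟨by omega⟩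
  refine ⟨Stmt12Aux.UU n m k l, Stmt12Aux.perm_mem_unitary _, ?_⟩
  unfold osr
  rw [Matrix.rank_eq_finrank_span_cols]
  have hspan : Submodule.span ℂ (Set.range (realign (Stmt12Aux.UU n m k l))ᵀ)
      = Submodule.span ℂ (Set.range (Stmt12Aux.VV n m hkn hlm)) := by
    apply le_antisymm
    · rw [Submodule.span_le]
      rintro _ ⟨q, rfl⟩
      rcases Stmt12Aux.cols_sub n m hk hkn hl hlm q with h | h
      · exact Submodule.subset_span h
      · simp only [Set.mem_singleton_iff] at h
        rw [h]
        exact Submodule.zero_mem _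
    · rw [Submodule.span_le]
      rintro _ ⟨ab, rfl⟩
      exact Submodule.subset_span (Stmt12Aux.VV_mem n m hk hkn hkm hlm ab)
  rw [show Set.range (realign (Stmt12Aux.UU n m k l)).col
      = Set.range (realign (Stmt12Aux.UU n m k l))ᵀ from rfl]
  rw [hspan, finrank_span_eq_card (Stmt12Aux.VV_li n m hk hkn hl hln hlm),
    Fintype.card_prod, Fintype.card_fin, Fintype.card_fin]
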